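/- Suppose there is a subsequence (M_k) and 0 ≤ c < 1 with N^s_∞([0,1) ∩ G^{f,m}_{p̄}(M_k, ε)) < c/K^s for all k, where K is the distortion constant of f. Then for each cylinder C ⊆ [0,1) of generation n there exists K_C such that N^s_∞(C ∩ G^{f,m}_{p̄}(M_k, ε/2)) < c|C|^s for all k > K_C (any k with n/M_k < ε/2 suffices). -/

import Mathlib

open Set MeasureTheory Filter
open scoped ENNReal Classical

noncomputable section

/-- A similarity transformation of `ℝ`. -/
def IsSimilarity (f : ℝ → ℝ) : Prop := ∃ a b : ℝ, a ≠ 0 ∧ ∀ x, f x = a * x + b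

/-- Falconer's class `𝒢^s`: Gδ sets all of whose images under countably many
similarities intersect in a set of Hausdorff dimension at least `s`. -/
def falconerClass (s : ℝ) : Set (Set ℝ) :=
  {F | IsGδ F ∧ ∀ T : ℕ → ℝ → ℝ, (∀ i, IsSimilarity (T i)) →
    ENNReal.ofReal s ≤ dimH (⋂ i, T i '' F)}

/-- A probability vector indexed by a finite type. -/
def IsProbVector {ι : Type*} [Fintype ι] (p : ι → ℝ) : Prop :=
  (∀ i, 0 ≤ p i) ∧ ∑ i, p i = 1

/-- A dyadic half-open interval `[2^k m, 2^k (m+1))`. -/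
def IsDyadic (I : Set ℝ) : Prop :=
  ∃ (k m : ℤ), I = Ico ((2:ℝ) ^ k * m) ((2:ℝ) ^ k * (m + 1))

/-- The outer measure `M^s_∞` obtained from countable covers by dyadic intervals. -/
def dyadicMeasure (s : ℝ) (A : Set ℝ) : ℝ≥0∞ :=
  ⨅ (I : ℕ → Set ℝ) (_ : ∀ i, IsDyadic (I i)) (_ : A ⊆ ⋃ i, I i),
    ∑' i, volume (I i) ^ s

/-- Extension of a subset of `[0,1)` to `ℝ` by integer translations. -/
def periodize (A : Set ℝ) : Set ℝ := ⋃ k : ℤ, (fun x => x + (k : ℝ)) '' A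

/-- An expanding interval map on `[0,1)` with `g` full monotone branches,
generating a full shift on `g` symbols. -/
structure ExpandingFullShift where
  g : ℕ
  one_lt_g : 1 < g
  branch : Fin g → Set ℝ
  branch_Ico : ∀ i, ∃ a b : ℝ, a < b ∧ branch i = Ico a b
  branch_cover : (⋃ i, branch i) = Ico (0:ℝ) 1
  branch_disjoint : ∀ i j, i ≠ j → Disjoint (branch i) (branch j)
  f : ℝ → ℝ
  f_onto : ∀ i, f '' branch i = Ico (0:ℝ) 1
  f_mono : ∀ i, StrictMonoOn f (branch i) ∨ StrictAntiOn f (branch i)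
  f_expanding : ∀ i, ∀ x ∈ branch i, ∀ y ∈ branch i, |x - y| ≤ |f x - f y|

namespace ExpandingFullShift

variable (E : ExpandingFullShift)

/-- The symbol `0`. -/
def zeroSym : Fin E.g := ⟨0, Nat.lt_trans Nat.one_pos E.one_lt_g⟩

/-- The cylinder `C_{x₁ … x_n} ⊆ [0,1)` determined by a word `w`. -/
def cylinder (w : List (Fin E.g)) : Set ℝ :=
  {x ∈ Ico (0:ℝ) 1 | ∀ k (hk : k < w.length), E.f^[k] x ∈ E.branch (w.get ⟨k, hk⟩)}

/-- A cylinder in some interval `[k, k+1)`, `k ∈ ℤ` (periodic extension of the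
cylinder structure to `ℝ`). -/
def IsCylinderZ (C : Set ℝ) : Prop :=
  ∃ (w : List (Fin E.g)) (k : ℤ), C = (fun x => x + (k : ℝ)) '' E.cylinder w

/-- The outer measure `N^s_∞` obtained from countable covers by cylinders of `E`. -/
def cylMeasure (s : ℝ) (A : Set ℝ) : ℝ≥0∞ :=
  ⨅ (c : ℕ → List (Fin E.g)) (_ : A ⊆ ⋃ i, E.cylinder (c i)),
    ∑' i, volume (E.cylinder (c i)) ^ s

/-- The outer measure `N^s_∞` from covers by cylinders of the periodic extension. -/
def cylMeasureZ (s : ℝ) (A : Set ℝ) : ℝ≥0∞ :=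
  ⨅ (c : ℕ → Set ℝ) (_ : ∀ i, E.IsCylinderZ (c i)) (_ : A ⊆ ⋃ i, c i),
    ∑' i, volume (c i) ^ s

/-- The empirical frequency `τ^f_w(x,n)/(n-m)` of the word `w` (of length `m`)
in the first `n` symbols of the expansion of `x`. -/
def freq {m : ℕ} (w : Fin m → Fin E.g) (x : ℝ) (n : ℕ) : ℝ :=
  (((Finset.range (n - m)).filter
      (fun i => ∀ k : Fin m, E.f^[i + k] x ∈ E.branch (w k))).card : ℝ) / ((n - m : ℕ) : ℝ)

/-- `G^{f,m}_{p̄}`: the set of points whose length-`m` word frequencies converge to `p̄`. -/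
def Gset (m : ℕ) (p : (Fin m → Fin E.g) → ℝ) : Set ℝ :=
  {x ∈ Ico (0:ℝ) 1 | ∀ w : Fin m → Fin E.g,
    Tendsto (fun n => E.freq w x n) atTop (nhds (p w))}

/-- `G^{f,m}_{p̄}(n,ε)`: points whose empirical length-`m` word frequencies at time `n`
are within `ε` of `p̄` componentwise. -/
def GsetApprox (m : ℕ) (p : (Fin m → Fin E.g) → ℝ) (n : ℕ) (ε : ℝ) : Set ℝ :=
  {x ∈ Ico (0:ℝ) 1 | ∀ w : Fin m → Fin E.g, |E.freq w x n - p w| < ε}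

/-- `p̄ ∈ A^{f,m}(x)`: the vector `p̄` is an accumulation point of the empirical
frequency vectors of `x` as `n → ∞`. -/
def IsFreqAccum (m : ℕ) (p : (Fin m → Fin E.g) → ℝ) (x : ℝ) : Prop :=
  MapClusterPt p atTop (fun n => fun w => E.freq w x n)

/-- `x` is `m`-normal to `f`: every length-`m` word occurs with frequency equal to
the length of the corresponding cylinder. -/
def IsNormal (m : ℕ) (x : ℝ) : Prop :=
  ∀ w : Fin m → Fin E.g,
    Tendsto (fun n => E.freq w x n) atTop (nhds (volume (E.cylinder (List.ofFn w))).toReal)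

/-- Bounded distortion with constant `K`:
`|C_u||C_v|/K ≤ |C_{uv}| ≤ K |C_u||C_v|` for all words `u, v`. -/
def HasBoundedDistortion (K : ℝ) : Prop :=
  ∀ u v : List (Fin E.g),
    volume (E.cylinder (u ++ v)) ≤
      ENNReal.ofReal K * (volume (E.cylinder u) * volume (E.cylinder v)) ∧
    volume (E.cylinder u) * volume (E.cylinder v) ≤
      ENNReal.ofReal K * volume (E.cylinder (u ++ v))

/-- Condition (ii): for each `m` there is `p̄` with `dim_H G^{f,m}_{p̄} = 1`, and for
each word `w` of length `m` there are vectors `q̄` with `q_w ≠ p_w` whose `G`-set has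
Hausdorff dimension arbitrarily close to `1`. -/
def CondII : Prop :=
  ∀ m : ℕ, 0 < m → ∃ p : (Fin m → Fin E.g) → ℝ, IsProbVector p ∧ dimH (E.Gset m p) = 1 ∧
    ∀ w : Fin m → Fin E.g, ∀ t : ℝ≥0∞, t < 1 → ∃ q : (Fin m → Fin E.g) → ℝ,
      IsProbVector q ∧ q w ≠ p w ∧ t ≤ dimH (E.Gset m q)

end ExpandingFullShift


namespace ExpandingFullShift

variable (E : ExpandingFullShift)

lemma branch_subset' (i : Fin E.g) : E.branch i ⊆ Ico (0:ℝ) 1 := by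
  rw [← E.branch_cover]; exact subset_iUnion _ i

lemma f_mem_Ico' {i : Fin E.g} {x : ℝ} (hx : x ∈ E.branch i) : E.f x ∈ Ico (0:ℝ) 1 := by
  rw [← E.f_onto i]; exact mem_image_of_mem _ hx

lemma cylinder_nil' : E.cylinder [] = Ico (0:ℝ) 1 := by
  ext x; simp [cylinder]

lemma cylinder_cons' (i : Fin E.g) (w : List (Fin E.g)) :
    E.cylinder (i :: w) = E.branch i ∩ E.f ⁻¹' E.cylinder w := by
  ext x
  constructor
  · rintro ⟨hx, hall⟩
    have h0 := hall 0 (by simp)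
    refine ⟨h0, E.f_mem_Ico' h0, ?_⟩
    intro k hk
    have := hall (k+1) (by simpa using Nat.succ_lt_succ hk)
    simpa [Function.iterate_succ_apply] using this
  · rintro ⟨hbi, hfx, hall⟩
    refine ⟨E.branch_subset' i hbi, ?_⟩
    intro k hk
    match k with
    | 0 => exact hbi
    | k+1 =>
      have hk' : k < w.length := by simpa using hk
      have := hall k hk'
      simpa [Function.iterate_succ_apply] using this

lemma cylinder_ordConn' : ∀ (w : List (Fin E.g)), ∀ x ∈ E.cylinder w, ∀ y ∈ E.cylinder w,
    Icc x y ⊆ E.cylinder w := by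
  intro w
  induction w with
  | nil =>
    rw [E.cylinder_nil']
    intro x hx y hy z hz
    exact ⟨le_trans hx.1 hz.1, lt_of_le_of_lt hz.2 hy.2⟩
  | cons i w ih =>
    rw [E.cylinder_cons']
    rintro x ⟨hxb, hxf⟩ y ⟨hyb, hyf⟩ z hz
    obtain ⟨a, b, hab, hIco⟩ := E.branch_Ico i
    have hzb : z ∈ E.branch i := by
      rw [hIco] at hxb hyb ⊢
      exact ⟨le_trans hxb.1 hz.1, lt_of_le_of_lt hz.2 hyb.2⟩
    refine ⟨hzb, ?_⟩
    rcases E.f_mono i with hmono | hanti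
    · have h1 : E.f x ≤ E.f z := hmono.monotoneOn hxb hzb hz.1
      have h2 : E.f z ≤ E.f y := hmono.monotoneOn hzb hyb hz.2
      exact ih (E.f x) hxf (E.f y) hyf ⟨h1, h2⟩
    · have h1 : E.f y ≤ E.f z := hanti.antitoneOn hzb hyb hz.2
      have h2 : E.f z ≤ E.f x := hanti.antitoneOn hxb hzb hz.1
      exact ih (E.f y) hyf (E.f x) hxf ⟨h1, h2⟩

lemma cylinder_infinite' (w : List (Fin E.g)) : (E.cylinder w).Infinite := by
  induction w with
  | nil =>
    rw [E.cylinder_nil']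
    exact Set.Ico_infinite zero_lt_one
  | cons i w ih =>
    have hsub : E.cylinder w ⊆ E.f '' E.cylinder (i :: w) := by
      intro y hy
      have hy1 : y ∈ Ico (0:ℝ) 1 := hy.1
      rw [← E.f_onto i] at hy1
      obtain ⟨x, hxb, hfx⟩ := hy1
      refine ⟨x, ?_, hfx⟩
      rw [E.cylinder_cons']
      exact ⟨hxb, by rw [mem_preimage, hfx]; exact hy⟩
    exact Set.Infinite.of_image _ (ih.mono hsub)

lemma volume_cylinder_pos' (w : List (Fin E.g)) : 0 < volume (E.cylinder w) := by
  obtain ⟨x, hx, y, hy, hxy⟩ := (E.cylinder_infinite' w).nontrivial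
  have key : ∀ u ∈ E.cylinder w, ∀ v ∈ E.cylinder w, u < v → 0 < volume (E.cylinder w) := by
    intro u hu v hv huv
    have h1 : volume (Icc u v) ≤ volume (E.cylinder w) :=
      measure_mono (E.cylinder_ordConn' w u hu v hv)
    rw [Real.volume_Icc] at h1
    exact lt_of_lt_of_le (ENNReal.ofReal_pos.mpr (by linarith)) h1
  rcases lt_or_gt_of_ne hxy with hlt | hlt
  · exact key x hx y hy hlt
  · exact key y hy x hx hlt

lemma volume_cylinder_le_one' (w : List (Fin E.g)) : volume (E.cylinder w) ≤ 1 := by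
  have : E.cylinder w ⊆ Ico (0:ℝ) 1 := fun x hx => hx.1
  calc volume (E.cylinder w) ≤ volume (Ico (0:ℝ) 1) := measure_mono this
    _ = 1 := by simp [Real.volume_Ico]

lemma iterate_mem_Ico' : ∀ {w : List (Fin E.g)} {x : ℝ}, x ∈ E.cylinder w →
    E.f^[w.length] x ∈ Ico (0:ℝ) 1 := by
  intro w
  induction w with
  | nil => intro x hx; exact hx.1
  | cons i w ih =>
    intro x hx
    rw [E.cylinder_cons'] at hx
    have := ih hx.2
    simpa [Function.iterate_succ_apply] using this

lemma mem_cylinder_append' {w v : List (Fin E.g)} {x : ℝ}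
    (hx : x ∈ E.cylinder w) (hv : E.f^[w.length] x ∈ E.cylinder v) :
    x ∈ E.cylinder (w ++ v) := by
  refine ⟨hx.1, ?_⟩
  intro k hk
  by_cases hkw : k < w.length
  · have h1 := hx.2 k hkw
    have h2 : (w ++ v).get ⟨k, hk⟩ = w.get ⟨k, hkw⟩ := by
      simp only [List.get_eq_getElem]
      exact List.getElem_append_left hkw
    rw [h2]; exact h1
  · have hk2 : k - w.length < v.length := by
      have := hk; rw [List.length_append] at this; omega
    have h1 := hv.2 (k - w.length) hk2
    have hiter : E.f^[k] x = E.f^[k - w.length] (E.f^[w.length] x) := by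
      rw [← Function.iterate_add_apply]
      congr 1; omega
    have h2 : (w ++ v).get ⟨k, hk⟩ = v.get ⟨k - w.length, hk2⟩ := by
      simp [List.get_eq_getElem, List.getElem_append_right (by omega : w.length ≤ k)]
    rw [h2, hiter]; exact h1

/-- If `A` injects into `B` by `i ↦ i + n` (when possible), its card exceeds `B`'s by at most `n`. -/
lemma card_le_add_of_shift (D n : ℕ) (A B : Finset ℕ) (hA : ∀ i ∈ A, i < D)
    (hAB : ∀ i ∈ A, i + n < D → i + n ∈ B) : A.card ≤ n + B.card := by
  classical
  have hsplit := Finset.card_filter_add_card_filter_not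
    (s := A) (p := fun i => i + n < D)
  have h1 : (A.filter (fun i => i + n < D)).card ≤ B.card := by
    apply Finset.card_le_card_of_injOn (fun i => i + n)
    · intro i hi
      simp only [Finset.coe_filter, Set.mem_setOf_eq] at hi
      exact hAB i hi.1 hi.2
    · intro i _ j _ hij
      simpa using hij
  have h2 : (A.filter (fun i => ¬ i + n < D)).card ≤ n := by
    calc (A.filter (fun i => ¬ i + n < D)).card
        ≤ (Finset.Ico (D - n) D).card := by
          apply Finset.card_le_card
          intro i hi
          rw [Finset.mem_filter] at hi
          have := hA i hi.1
          rw [Finset.mem_Ico]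
          omega
      _ ≤ n := by rw [Nat.card_Ico]; omega
  omega

/-- If `B` injects into `A` by `j ↦ j - n` (when `n ≤ j`), its card exceeds `A`'s by at most `n`. -/
lemma card_le_add_of_unshift (n : ℕ) (A B : Finset ℕ)
    (hBA : ∀ j ∈ B, n ≤ j → j - n ∈ A) : B.card ≤ n + A.card := by
  classical
  have hsplit := Finset.card_filter_add_card_filter_not
    (s := B) (p := fun j => n ≤ j)
  have h1 : (B.filter (fun j => n ≤ j)).card ≤ A.card := by
    apply Finset.card_le_card_of_injOn (fun j => j - n)
    · intro j hj
      simp only [Finset.coe_filter, Set.mem_setOf_eq] at hj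
      exact hBA j hj.1 hj.2
    · intro i hi j hj hij
      simp only [Finset.coe_filter, Set.mem_setOf_eq] at hi hj
      simp only [] at hij
      omega
  have h2 : (B.filter (fun j => ¬ n ≤ j)).card ≤ n := by
    calc (B.filter (fun j => ¬ n ≤ j)).card
        ≤ (Finset.range n).card := by
          apply Finset.card_le_card
          intro j hj
          rw [Finset.mem_filter] at hj
          rw [Finset.mem_range]
          omega
      _ ≤ n := by simp
  omega

lemma freq_shift' {m : ℕ} (w : Fin m → Fin E.g) (x : ℝ) (n N : ℕ) :
    |E.freq w (E.f^[n] x) N - E.freq w x N| ≤ (n : ℝ) / ((N - m : ℕ) : ℝ) := by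
  have hiff : ∀ i, (∀ k : Fin m, E.f^[i + (k : ℕ)] (E.f^[n] x) ∈ E.branch (w k)) ↔
      (∀ k : Fin m, E.f^[(i + n) + (k : ℕ)] x ∈ E.branch (w k)) := by
    intro i
    have key : ∀ k : Fin m, E.f^[i + (k : ℕ)] (E.f^[n] x) = E.f^[(i + n) + (k : ℕ)] x := by
      intro k
      rw [← Function.iterate_add_apply]
      congr 1; omega
    constructor <;> intro hh k <;> [rw [← key k]; rw [key k]] <;> exact hh k
  rcases Nat.eq_zero_or_pos (N - m) with hD0 | hDpos
  · simp [freq, hD0]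
  · have hDpos' : (0:ℝ) < ((N - m : ℕ) : ℝ) := by exact_mod_cast hDpos
    rw [freq, freq, div_sub_div_same, abs_div, abs_of_pos hDpos',
      div_le_div_iff_of_pos_right hDpos', abs_sub_le_iff]
    constructor
    · rw [sub_le_iff_le_add, ← Nat.cast_add, Nat.cast_le]
      refine card_le_add_of_shift (N - m) n _ _ ?_ ?_
      · intro i hi
        exact Finset.mem_range.mp (Finset.mem_filter.mp hi).1
      · intro i hi hilt
        rw [Finset.mem_filter] at hi ⊢
        exact ⟨Finset.mem_range.mpr hilt, (hiff i).mp hi.2⟩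
    · rw [sub_le_iff_le_add, ← Nat.cast_add, Nat.cast_le]
      refine card_le_add_of_unshift n _ _ ?_
      · intro j hj hnj
        rw [Finset.mem_filter] at hj ⊢
        have hjD := Finset.mem_range.mp hj.1
        refine ⟨Finset.mem_range.mpr (by omega), ?_⟩
        apply (hiff (j - n)).mpr
        have hjn : j - n + n = j := by omega
        rw [hjn]
        exact hj.2

end ExpandingFullShift

open ExpandingFullShift in
/-- if `N^s_∞([0,1) ∩ G^{f,m}_{p̄}(M_k,ε)) < c/K^s` along a subsequence,
then for each cylinder `C` there is `K_C` with
`N^s_∞(C ∩ G^{f,m}_{p̄}(M_k, ε/2)) < c|C|^s` for all `k > K_C`. -/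
theorem cylMeasure_subsequence_cylinder (E : ExpandingFullShift) (K : ℝ) (hK : 1 ≤ K)
    (hbd : E.HasBoundedDistortion K)
    (m : ℕ) (hm : 0 < m) (p : (Fin m → Fin E.g) → ℝ) (hp : IsProbVector p)
    (ε : ℝ) (hε : 0 < ε) (s : ℝ) (hs0 : 0 < s) (hs1 : s ≤ 1)
    (M : ℕ → ℕ) (hM : StrictMono M) (c : ℝ) (hc0 : 0 ≤ c) (hc1 : c < 1)
    (h : ∀ k, E.cylMeasure s (Ico (0:ℝ) 1 ∩ E.GsetApprox m p (M k) ε)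
      < ENNReal.ofReal (c / K ^ s)) :
    ∀ w : List (Fin E.g), ∃ KC : ℕ, ∀ k > KC,
      E.cylMeasure s (E.cylinder w ∩ E.GsetApprox m p (M k) (ε / 2))
        < ENNReal.ofReal c * volume (E.cylinder w) ^ s := by
  intro w
  set n := w.length with hn
  refine ⟨m + Nat.ceil (2 * (n : ℝ) / ε), fun k hk => ?_⟩
  -- the denominator is large
  have hMk : m + Nat.ceil (2 * (n : ℝ) / ε) < M k := lt_of_lt_of_le hk (hM.le_apply)
  have hDlarge : (2 * (n : ℝ) / ε) < ((M k - m : ℕ) : ℝ) := by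
    have h1 : (2 * (n : ℝ) / ε) ≤ (Nat.ceil (2 * (n : ℝ) / ε) : ℝ) := Nat.le_ceil _
    have h2 : Nat.ceil (2 * (n : ℝ) / ε) < M k - m := by omega
    have h2' : ((Nat.ceil (2 * (n : ℝ) / ε) : ℕ) : ℝ) < ((M k - m : ℕ) : ℝ) := by
      exact_mod_cast h2
    linarith
  have hD0 : (0:ℝ) < ((M k - m : ℕ) : ℝ) := lt_of_le_of_lt (by positivity) hDlarge
  have hshift_small : (n : ℝ) / ((M k - m : ℕ) : ℝ) ≤ ε / 2 := by
    rw [div_le_iff₀ hD0]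
    rw [div_lt_iff₀ hε] at hDlarge
    linarith
  -- extract a good cover from the hypothesis
  obtain ⟨cov, hcovsub, hcovsum⟩ : ∃ cov : ℕ → List (Fin E.g),
      (Ico (0:ℝ) 1 ∩ E.GsetApprox m p (M k) ε ⊆ ⋃ i, E.cylinder (cov i)) ∧
      ∑' i, volume (E.cylinder (cov i)) ^ s < ENNReal.ofReal (c / K ^ s) := by
    have hh := h k
    rw [cylMeasure] at hh
    obtain ⟨cov, hlt⟩ := iInf_lt_iff.mp hh
    by_cases hsub : (Ico (0:ℝ) 1 ∩ E.GsetApprox m p (M k) ε ⊆ ⋃ i, E.cylinder (cov i))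
    · exact ⟨cov, hsub, by rwa [iInf_pos hsub] at hlt⟩
    · rw [iInf_neg hsub] at hlt
      exact absurd hlt (by simp)
  -- the shifted cover covers the target set
  have hsubtarget : E.cylinder w ∩ E.GsetApprox m p (M k) (ε / 2) ⊆
      ⋃ i, E.cylinder (w ++ cov i) := by
    rintro x ⟨hxw, hxG⟩
    have hy : E.f^[n] x ∈ Ico (0:ℝ) 1 := E.iterate_mem_Ico' hxw
    have hyG : E.f^[n] x ∈ E.GsetApprox m p (M k) ε := by
      refine ⟨hy, fun w' => ?_⟩
      have h1 := hxG.2 w'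
      have h2 := E.freq_shift' w' x n (M k)
      calc |E.freq w' (E.f^[n] x) (M k) - p w'|
          ≤ |E.freq w' (E.f^[n] x) (M k) - E.freq w' x (M k)|
            + |E.freq w' x (M k) - p w'| := abs_sub_le _ _ _
        _ < ε / 2 + ε / 2 := by
            have := le_trans h2 hshift_small
            linarith
        _ = ε := by ring
    obtain ⟨_, ⟨i, rfl⟩, hi⟩ := hcovsub ⟨hy, hyG⟩
    exact mem_iUnion.mpr ⟨i, E.mem_cylinder_append' hxw hi⟩
  -- basic facts about the cylinder volume
  have hVpos := E.volume_cylinder_pos' w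
  have hVle := E.volume_cylinder_le_one' w
  have hVne : volume (E.cylinder w) ≠ ⊤ := ne_top_of_le_ne_top ENNReal.one_ne_top hVle
  have hKpos : (0:ℝ) < K := lt_of_lt_of_le one_pos hK
  -- main estimate
  have hle : E.cylMeasure s (E.cylinder w ∩ E.GsetApprox m p (M k) (ε / 2)) ≤
      ∑' i, volume (E.cylinder (w ++ cov i)) ^ s := by
    rw [cylMeasure]
    exact iInf₂_le (fun i => w ++ cov i) hsubtarget
  have hterm : ∀ i, volume (E.cylinder (w ++ cov i)) ^ s ≤
      (ENNReal.ofReal K ^ s * volume (E.cylinder w) ^ s) * volume (E.cylinder (cov i)) ^ s := by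
    intro i
    calc volume (E.cylinder (w ++ cov i)) ^ s
        ≤ (ENNReal.ofReal K * (volume (E.cylinder w) * volume (E.cylinder (cov i)))) ^ s :=
          ENNReal.rpow_le_rpow (hbd w (cov i)).1 hs0.le
      _ = (ENNReal.ofReal K ^ s * volume (E.cylinder w) ^ s) * volume (E.cylinder (cov i)) ^ s := by
          rw [ENNReal.mul_rpow_of_nonneg _ _ hs0.le, ENNReal.mul_rpow_of_nonneg _ _ hs0.le,
            mul_assoc]
  have hane0 : (ENNReal.ofReal K ^ s * volume (E.cylinder w) ^ s) ≠ 0 := by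
    apply mul_ne_zero
    · exact (ENNReal.rpow_pos (ENNReal.ofReal_pos.mpr hKpos) ENNReal.ofReal_ne_top).ne'
    · exact (ENNReal.rpow_pos hVpos hVne).ne'
  have hanetop : (ENNReal.ofReal K ^ s * volume (E.cylinder w) ^ s) ≠ ⊤ := by
    apply ENNReal.mul_ne_top
    · exact ENNReal.rpow_ne_top_of_nonneg hs0.le ENNReal.ofReal_ne_top
    · exact ENNReal.rpow_ne_top_of_nonneg hs0.le hVne
  have hKs0 : (0:ℝ) < K ^ s := Real.rpow_pos_of_pos hKpos s
  calc E.cylMeasure s (E.cylinder w ∩ E.GsetApprox m p (M k) (ε / 2))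
      ≤ ∑' i, volume (E.cylinder (w ++ cov i)) ^ s := hle
    _ ≤ (ENNReal.ofReal K ^ s * volume (E.cylinder w) ^ s)
        * ∑' i, volume (E.cylinder (cov i)) ^ s := by
        rw [← ENNReal.tsum_mul_left]
        exact ENNReal.tsum_le_tsum hterm
    _ < (ENNReal.ofReal K ^ s * volume (E.cylinder w) ^ s) * ENNReal.ofReal (c / K ^ s) := by
        exact (ENNReal.mul_lt_mul_iff_right hane0 hanetop).mpr hcovsum
    _ = ENNReal.ofReal c * volume (E.cylinder w) ^ s := by
        rw [ENNReal.ofReal_rpow_of_pos hKpos, mul_right_comm,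
          ← ENNReal.ofReal_mul (by positivity : (0:ℝ) ≤ K ^ s), mul_comm (K ^ s),
          div_mul_cancel₀ c hKs0.ne']
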